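/- arXiv:1604.05288 — 3 statements merged into one kernel-verified Lean document; each statement's English description precedes it below -/
import Mathlib

section
/- If M is an inductively coherent approximation scheme, and {φₙ} and {ψₙ} are quickly computable sequences of sentences such that for every n the equivalence φₙ ↔ ψₙ is provable in T, then the difference Mₙ(φₙ) − Mₙ(ψₙ) tends to 0 as n → ∞. -/
open Filter Topology

/-- An abstract language of sentences with the usual connectives and a
provability predicate. -/
structure LogicCtx (S : Type) where
  neg : S → S
  disj : S → S → S
  conj : S → S → S
  imp : S → S → S
  bot : S
  Provable : S → Prop

namespace LogicCtx

variable {S : Type} (L : LogicCtx S)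

/-- Conjunction of a list of sentences. -/
def bigConj : List S → S
  | [] => L.neg L.bot
  | φ :: rest => L.conj φ (bigConj rest)

/-- Disjunction of a list of sentences. -/
def bigDisj : List S → S
  | [] => L.bot
  | φ :: rest => L.disj φ (bigDisj rest)

/-- The sentence expressing that exactly one member of `l` is true. -/
def exactlyOne (l : List S) : S :=
  L.bigDisj ((List.range l.length).map fun i =>
    L.bigConj (l.mapIdx fun j φ => if i = j then φ else L.neg φ))

/-- `{φ, ψ, χ}` is a provable partition of truth: it is provable that exactly
one of them holds. -/
def PartitionOfTruth (φ ψ χ : S) : Prop :=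
  L.Provable (L.exactlyOne [φ, ψ, χ])

/-- Finite disjunctions `f 0 ∨ ⋯ ∨ f n` of a sequence. -/
def finDisj (f : ℕ → S) : ℕ → S
  | 0 => f 0
  | n + 1 => L.disj (finDisj f n) (f (n + 1))

/-- A boolean valuation respecting the connectives. -/
def IsValuation (v : S → Bool) : Prop :=
  v L.bot = false ∧ (∀ φ, v (L.neg φ) = !v φ) ∧
  (∀ φ ψ, v (L.disj φ ψ) = (v φ || v ψ)) ∧
  (∀ φ ψ, v (L.conj φ ψ) = (v φ && v ψ)) ∧
  (∀ φ ψ, v (L.imp φ ψ) = (!v φ || v ψ))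

/-- `Provable` respects propositional reasoning: every propositional
consequence of provable sentences is provable. -/
def RespectsPropLogic : Prop :=
  ∀ φ, (∀ v, L.IsValuation v → (∀ χ, L.Provable χ → v χ = true) → v φ = true) →
    L.Provable φ

/-- The family of quickly computable sequences: contains all constant
sequences and is closed under pointwise negation, disjunction, conjunction,
finite disjunctions, and shift. -/
def QCClosed (QC : (ℕ → S) → Prop) : Prop :=
  (∀ φ, QC fun _ => φ) ∧
  (∀ f, QC f → QC fun n => L.neg (f n)) ∧
  (∀ f g, QC f → QC g → QC fun n => L.disj (f n) (g n)) ∧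
  (∀ f g, QC f → QC g → QC fun n => L.conj (f n) (g n)) ∧
  (∀ f, QC f → QC (L.finDisj f)) ∧
  (∀ f, QC f → QC fun n => f (n + 1))

/-- Inductive coherence of an approximation scheme `M : ℕ → S → ℝ` with
values in `[0,1]`:
1. `Mₙ(⊥) → 0`;
2. `Mₙ(φₙ)` converges whenever `{φₙ}` is quickly computable and each
   `φₙ → φₙ₊₁` is provable;
3. `Mₙ(φₙ) + Mₙ(ψₙ) + Mₙ(χₙ) → 1` whenever the three sequences are quickly
   computable and each `{φₙ, ψₙ, χₙ}` is a provable partition of truth. -/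
def InductivelyCoherent (QC : (ℕ → S) → Prop) (M : ℕ → S → ℝ) : Prop :=
  (∀ n φ, M n φ ∈ Set.Icc (0 : ℝ) 1) ∧
  Tendsto (fun n => M n L.bot) atTop (𝓝 0) ∧
  (∀ f, QC f → (∀ n, L.Provable (L.imp (f n) (f (n + 1)))) →
    ∃ l, Tendsto (fun n => M n (f n)) atTop (𝓝 l)) ∧
  (∀ f g h, QC f → QC g → QC h → (∀ n, L.PartitionOfTruth (f n) (g n) (h n)) →
    Tendsto (fun n => M n (f n) + M n (g n) + M n (h n)) atTop (𝓝 1))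

end LogicCtx

/-- If `M` is inductively coherent and `{φₙ}`, `{ψₙ}` are
quickly computable with `φₙ ↔ ψₙ` provable for every `n`, then
`Mₙ(φₙ) − Mₙ(ψₙ) → 0`. -/
theorem inductively_coherent_equiv_diff_tendsto_zero
    (S : Type) (L : LogicCtx S) (QC : (ℕ → S) → Prop)
    (hPL : L.RespectsPropLogic) (hQC : L.QCClosed QC)
    (M : ℕ → S → ℝ) (hM : L.InductivelyCoherent QC M)
    (φ ψ : ℕ → S) (hφ : QC φ) (hψ : QC ψ)
    (hequiv : ∀ n, L.Provable (L.imp (φ n) (ψ n)) ∧ L.Provable (L.imp (ψ n) (φ n))) :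
    Filter.Tendsto (fun n => M n (φ n) - M n (ψ n)) Filter.atTop (nhds 0) := by
  obtain ⟨hconst, hneg, hdisj, hconj, hfd, hshift⟩ := hQC
  obtain ⟨hbdd, hbot, hconv, hpart⟩ := hM
  -- key: {α, ¬β, ⊥} is a partition of truth whenever α ↔ β is provable
  have key : ∀ α β : S, L.Provable (L.imp α β) → L.Provable (L.imp β α) →
      L.PartitionOfTruth α (L.neg β) L.bot := by
    intro α β h1 h2
    apply hPL
    intro v hv hprov
    obtain ⟨vbot, vneg, vdisj, vconj, vimp⟩ := hv
    have e1 := hprov _ h1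
    have e2 := hprov _ h2
    rw [vimp] at e1 e2
    simp only [LogicCtx.PartitionOfTruth, LogicCtx.exactlyOne, LogicCtx.bigDisj,
      LogicCtx.bigConj, List.length, List.range_succ, List.range_zero, List.map,
      List.mapIdx, List.mapIdx.go] at *
    simp [vdisj, vconj, vneg, vbot, LogicCtx.bigDisj, LogicCtx.bigConj]
    cases hva : v α <;> cases hvb : v β <;> simp_all
  have p1 : L.PartitionOfTruth (φ 0) (L.neg (ψ 0)) L.bot := by
    exact key _ _ (hequiv 0).1 (hequiv 0).2
  have t1 : Filter.Tendsto (fun n => M n (φ n) + M n (L.neg (ψ n)) + M n L.bot)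
      Filter.atTop (nhds 1) := by
    apply hpart _ _ _ hφ (hneg _ hψ) (hconst _)
    intro n; exact key _ _ (hequiv n).1 (hequiv n).2
  have t2 : Filter.Tendsto (fun n => M n (ψ n) + M n (L.neg (ψ n)) + M n L.bot)
      Filter.atTop (nhds 1) := by
    apply hpart _ _ _ hψ (hneg _ hψ) (hconst _)
    intro n
    apply key _ _ <;> · apply hPL; intro v hv _; simpa [hv.2.2.2.2] using Bool.or_not_self _
  have := t1.sub t2
  simp only [sub_self] at this
  convert this using 2 with n
  ring
end

section
/- If M is an inductively coherent approximation scheme, k ≥ 1, and {φₙ¹},…,{φₙᵏ} are quickly computable sequences of sentences such that for each n it is provable that exactly one of φₙ¹,…,φₙᵏ is true, then the sum Σᵢ Mₙ(φₙⁱ) tends to 1 as n → ∞. -/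
open Filter Topology

namespace LogicCtx

variable {S : Type} (L : LogicCtx S) {v : S → Bool}

lemma sem_bigDisj (hv : L.IsValuation v) (m : List S) : v (L.bigDisj m) = m.any (fun s => v s) := by
  induction m with
  | nil => simp [bigDisj, hv.1]
  | cons x t ih => simp [bigDisj, hv.2.2.1, ih]

lemma sem_bigConj (hv : L.IsValuation v) (m : List S) : v (L.bigConj m) = m.all (fun s => v s) := by
  induction m with
  | nil => simp [bigConj, hv.2.1, hv.1]
  | cons x t ih => simp [bigConj, hv.2.2.2.1, ih]

lemma sem_exactlyOne (hv : L.IsValuation v) (l : List S) :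
    v (L.exactlyOne l) = true ↔ l.countP (fun s => v s) = 1 := by
  have key : ∀ t : List S,
      ((∃ i, ∃ _ : i < t.length, ∀ j (hj : j < t.length), (v t[j] = true ↔ i = j)) ↔
        t.countP (fun s => v s) = 1) := by
    intro t
    induction t with
    | nil => simp
    | cons x t ih =>
      rw [List.countP_cons]
      by_cases hx : v x = true
      · rw [if_pos (by simpa using hx)]
        constructor
        · rintro ⟨i, hi, h⟩
          have hi0 : i = 0 := by
            have := (h 0 (by omega)).mp (by simpa using hx)
            omega
          subst hi0
          have ht0 : t.countP (fun s => v s) = 0 := by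
            rw [List.countP_eq_zero]
            intro a ha
            obtain ⟨j, hj, rfl⟩ := List.mem_iff_getElem.mp ha
            have := h (j + 1) (by simpa using Nat.succ_lt_succ hj)
            simp only [List.getElem_cons_succ] at this
            simpa using fun hh => Nat.succ_ne_zero j (this.mp hh).symm
          omega
        · intro h1
          have ht0 : t.countP (fun s => v s) = 0 := by omega
          rw [List.countP_eq_zero] at ht0
          refine ⟨0, by simp, fun j hj => ?_⟩
          match j with
          | 0 => simpa using hx
          | j + 1 =>
            simp only [List.getElem_cons_succ]
            constructor
            · intro hh
              exact absurd hh (by simpa using ht0 _ (List.getElem_mem _))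
            · omega
      · rw [if_neg (by simpa using hx)]
        rw [add_zero, ← ih]
        constructor
        · rintro ⟨i, hi, h⟩
          match i with
          | 0 => exact absurd ((h 0 (by omega)).mpr rfl) hx
          | i + 1 =>
            refine ⟨i, by simpa using hi, fun j hj => ?_⟩
            have := h (j + 1) (by simpa using Nat.succ_lt_succ hj)
            simpa using this
        · rintro ⟨i, hi, h⟩
          refine ⟨i + 1, by simpa using Nat.succ_lt_succ hi, fun j hj => ?_⟩
          match j with
          | 0 =>
            simp only [List.getElem_cons_zero]
            exact ⟨fun hh => absurd hh hx, fun hh => absurd hh (Nat.succ_ne_zero i)⟩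
          | j + 1 =>
            have := h j (by simp only [List.length_cons] at hj; omega)
            simpa using this
  rw [← key]
  rw [exactlyOne, sem_bigDisj L hv, List.any_eq_true]
  simp only [List.mem_map, List.mem_range]
  constructor
  · rintro ⟨_, ⟨i, hi, rfl⟩, hall⟩
    refine ⟨i, hi, fun j hj => ?_⟩
    rw [sem_bigConj L hv, List.all_eq_true] at hall
    have hj' : j < (l.mapIdx fun j φ => if i = j then φ else L.neg φ).length := by
      simpa using hj
    have := hall _ (List.getElem_mem hj')
    rw [List.getElem_mapIdx] at this
    by_cases hij : i = j
    · simp only [hij, if_pos rfl] at this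
      simpa [hij] using this
    · rw [if_neg hij] at this
      rw [hv.2.1] at this
      simp only [Bool.not_eq_true'] at this
      simp [this, hij]
  · rintro ⟨i, hi, h⟩
    refine ⟨_, ⟨i, hi, rfl⟩, ?_⟩
    rw [sem_bigConj L hv, List.all_eq_true]
    intro x hxmem
    obtain ⟨j, hj, rfl⟩ := List.mem_iff_getElem.mp hxmem
    have hj' : j < l.length := by simpa using hj
    rw [List.getElem_mapIdx]
    by_cases hij : i = j
    · rw [if_pos hij]
      exact (h j hj').mpr hij
    · rw [if_neg hij, hv.2.1]
      have : ¬ v l[j] = true := fun hh => hij ((h j hj').mp hh)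
      simp [Bool.not_eq_true'] at this ⊢
      simp [this]

lemma prov_aux (hPL : L.RespectsPropLogic) (σ τ : S) (hσ : L.Provable σ)
    (h : ∀ v, L.IsValuation v → v σ = true → v τ = true) : L.Provable τ :=
  hPL τ fun v hv hp => h v hv (hp σ hσ)

lemma prov1 (hPL : L.RespectsPropLogic) (a : S) (h : L.Provable (L.exactlyOne [a])) :
    L.PartitionOfTruth a L.bot L.bot := by
  refine L.prov_aux hPL _ _ h (fun v hv hva => ?_)
  rw [sem_exactlyOne L hv] at hva ⊢
  simp only [List.countP_cons, List.countP_nil, hv.1] at hva ⊢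
  cases ha : v a <;> simp [ha] at hva ⊢

lemma prov2 (hPL : L.RespectsPropLogic) (a b : S) (rest : List S)
    (h : L.Provable (L.exactlyOne (a :: b :: rest))) :
    L.Provable (L.exactlyOne (L.disj a b :: rest)) := by
  refine L.prov_aux hPL _ _ h (fun v hv hva => ?_)
  rw [sem_exactlyOne L hv] at hva ⊢
  simp only [List.countP_cons, hv.2.2.1] at hva ⊢
  cases ha : v a <;> cases hb : v b <;> simp [ha, hb] at hva ⊢ <;> first | omega | exact hva

lemma prov3 (hPL : L.RespectsPropLogic) (a b : S) (rest : List S)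
    (h : L.Provable (L.exactlyOne (a :: b :: rest))) :
    L.PartitionOfTruth a b (L.neg (L.disj a b)) := by
  refine L.prov_aux hPL _ _ h (fun v hv hva => ?_)
  rw [sem_exactlyOne L hv] at hva ⊢
  simp only [List.countP_cons, List.countP_nil, hv.2.2.1, hv.2.1] at hva ⊢
  cases ha : v a <;> cases hb : v b <;> simp [ha, hb] at hva ⊢

lemma prov4 (hPL : L.RespectsPropLogic) (a b : S) :
    L.PartitionOfTruth (L.disj a b) (L.neg (L.disj a b)) L.bot := by
  refine hPL _ (fun v hv _ => ?_)
  rw [sem_exactlyOne L hv]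
  simp only [List.countP_cons, List.countP_nil, hv.2.2.1, hv.2.1, hv.1]
  cases ha : v a <;> cases hb : v b <;> simp [ha, hb]

lemma sum_tendsto (QC : (ℕ → S) → Prop) (M : ℕ → S → ℝ)
    (hPL : L.RespectsPropLogic) (hQC : L.QCClosed QC) (hM : L.InductivelyCoherent QC M) :
    ∀ (N : ℕ) (l : List (ℕ → S)), l.length = N + 1 → (∀ f ∈ l, QC f) →
      (∀ n, L.Provable (L.exactlyOne (l.map (fun f => f n)))) →
      Tendsto (fun n => (l.map (fun f => M n (f n))).sum) atTop (𝓝 1) := by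
  intro N
  induction N with
  | zero =>
    rintro (_ | ⟨a, (_ | ⟨b, t⟩)⟩) hlen hqc hprov
    · simp at hlen
    · have hpart : ∀ n, L.PartitionOfTruth (a n) L.bot L.bot := by
        intro n
        exact L.prov1 hPL (a n) (by simpa using hprov n)
      have h3 := hM.2.2.2 a (fun _ => L.bot) (fun _ => L.bot)
        (hqc a (by simp)) (hQC.1 L.bot) (hQC.1 L.bot) hpart
      have hbot := hM.2.1
      have h := (h3.sub hbot).sub hbot
      simp only [sub_zero] at h
      have h' : Tendsto (fun n => M n (a n)) atTop (𝓝 1) := h.congr (fun n => by ring)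
      simpa using h'
    · simp at hlen
  | succ N ih =>
    rintro (_ | ⟨a, (_ | ⟨b, t⟩)⟩) hlen hqc hprov
    · simp at hlen
    · simp at hlen
    · set d : ℕ → S := fun n => L.disj (a n) (b n) with hd
      have qa : QC a := hqc a (by simp)
      have qb : QC b := hqc b (by simp)
      have qd : QC d := hQC.2.2.1 a b qa qb
      have hprov' : ∀ n, L.Provable (L.exactlyOne ((d :: t).map (fun f => f n))) := by
        intro n
        have := L.prov2 hPL (a n) (b n) (t.map (fun f => f n)) (by simpa using hprov n)
        simpa using this
      have h1 := ih (d :: t) (by simpa using hlen) (by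
        intro f hf
        rcases List.mem_cons.mp hf with rfl | hf'
        · exact qd
        · exact hqc f (by simp [hf'])) hprov'
      have h2 := hM.2.2.2 a b (fun n => L.neg (d n)) qa qb (hQC.2.1 d qd)
        (fun n => L.prov3 hPL (a n) (b n) (t.map (fun f => f n)) (by simpa using hprov n))
      have h3 := hM.2.2.2 d (fun n => L.neg (d n)) (fun _ => L.bot) qd (hQC.2.1 d qd) (hQC.1 L.bot)
        (fun n => L.prov4 hPL (a n) (b n))
      have hbot := hM.2.1
      have h := ((h2.add h1).sub h3).add hbot
      norm_num at h
      refine h.congr (fun n => ?_)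
      simp only [List.map_cons, List.sum_cons]
      ring
end LogicCtx

/-- If `M` is inductively coherent, `k ≥ 1`, and
`{φₙ¹}, …, {φₙᵏ}` are quickly computable sequences such that for each `n` it
is provable that exactly one of `φₙ¹, …, φₙᵏ` is true, then
`∑ᵢ Mₙ(φₙⁱ) → 1`. -/
theorem inductively_coherent_partition_sum_tendsto_one
    (S : Type) (L : LogicCtx S) (QC : (ℕ → S) → Prop)
    (hPL : L.RespectsPropLogic) (hQC : L.QCClosed QC)
    (M : ℕ → S → ℝ) (hM : L.InductivelyCoherent QC M)
    (k : ℕ) (hk : 1 ≤ k) (φ : Fin k → ℕ → S) (hφ : ∀ i, QC (φ i))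
    (hpart : ∀ n, L.Provable (L.exactlyOne (List.ofFn fun i => φ i n))) :
    Filter.Tendsto (fun n => ∑ i : Fin k, M n (φ i n)) Filter.atTop (nhds 1) := by
  obtain ⟨N, rfl⟩ : ∃ N, k = N + 1 := ⟨k - 1, by omega⟩
  have h := L.sum_tendsto QC M hPL hQC hM N (List.ofFn φ) (by simp)
    (by
      intro f hf
      obtain ⟨i, rfl⟩ := List.mem_ofFn.mp hf
      exact hφ i)
    (by
      intro n
      have : (List.ofFn φ).map (fun f => f n) = List.ofFn (fun i => φ i n) := by
        simp [List.map_ofFn, Function.comp_def]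
      rw [this]
      exact hpart n)
  refine h.congr (fun n => ?_)
  simp [List.map_ofFn, List.sum_ofFn, Function.comp_def, Fin.sum_univ_succ]
end

section
/- If M is an inductively coherent approximation scheme, then the pointwise limit P(φ) := limₙ Mₙ(φ) exists for every sentence φ, takes values in [0,1], and is coherent: P(φ) = 1 for every provable φ, and P(φ ∨ ψ) = P(φ) + P(ψ) whenever ¬(φ ∧ ψ) is provable. -/
open Filter Topology

lemma val_exactlyOne3 {S : Type} (L : LogicCtx S) {v : S → Bool} (hv : L.IsValuation v)
    (a b c : S) :
    v (L.exactlyOne [a, b, c]) =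
      ((v a && !v b && !v c) || (!v a && v b && !v c) || (!v a && !v b && v c)) := by
  obtain ⟨h0, h1, h2, h3, h4⟩ := hv
  simp [LogicCtx.exactlyOne, LogicCtx.bigDisj, LogicCtx.bigConj, List.mapIdx_cons, List.mapIdx_nil, List.range_succ,
    h0, h1, h2, h3]
  cases v a <;> cases v b <;> cases v c <;> simp

/-- If `M` is inductively coherent, then the pointwise limit
`P(φ) := limₙ Mₙ(φ)` exists for every sentence, takes values in `[0,1]`, and
is coherent: `P(φ) = 1` for provable `φ`, and `P(φ ∨ ψ) = P(φ) + P(ψ)`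
whenever `¬(φ ∧ ψ)` is provable. -/
theorem inductively_coherent_limit_coherent
    (S : Type) (L : LogicCtx S) (QC : (ℕ → S) → Prop)
    (hPL : L.RespectsPropLogic) (hQC : L.QCClosed QC)
    (M : ℕ → S → ℝ) (hM : L.InductivelyCoherent QC M) :
    ∃ P : S → ℝ,
      (∀ φ, Filter.Tendsto (fun n => M n φ) Filter.atTop (nhds (P φ))) ∧
      (∀ φ, P φ ∈ Set.Icc (0 : ℝ) 1) ∧
      (∀ φ, L.Provable φ → P φ = 1) ∧
      (∀ φ ψ, L.Provable (L.neg (L.conj φ ψ)) → P (L.disj φ ψ) = P φ + P ψ) := by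
  obtain ⟨hbound, hbot, hconv, hpart⟩ := hM
  have hconst : ∀ φ : S, ∃ l, Tendsto (fun n => M n φ) atTop (𝓝 l) := by
    intro φ
    exact hconv _ (hQC.1 φ) (fun n => hPL _ (by
      intro v hv hprov
      rw [hv.2.2.2.2]
      cases v φ <;> simp))
  choose P hP using hconst
  have hIcc : ∀ φ, P φ ∈ Set.Icc (0 : ℝ) 1 := by
    intro φ
    constructor
    · exact ge_of_tendsto' (hP φ) (fun n => (hbound n φ).1)
    · exact le_of_tendsto' (hP φ) (fun n => (hbound n φ).2)
  have hprov1 : ∀ φ, L.Provable φ → P φ = 1 := by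
    intro φ hφ
    have hp : L.PartitionOfTruth φ L.bot L.bot := by
      apply hPL
      intro v hv hprov
      rw [val_exactlyOne3 L hv]
      rw [hv.1, hprov φ hφ]
      simp
    have h1 := hpart (fun _ => φ) (fun _ => L.bot) (fun _ => L.bot)
      (hQC.1 _) (hQC.1 _) (hQC.1 _) (fun _ => hp)
    have h2 := ((hP φ).add hbot).add hbot
    have := tendsto_nhds_unique h2 h1
    linarith
  refine ⟨P, hP, hIcc, hprov1, ?_⟩
  intro φ ψ h
  set χ := L.conj (L.neg φ) (L.neg ψ) with hχ
  have hpA : L.PartitionOfTruth φ ψ χ := by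
    apply hPL
    intro v hv hprov
    have hh := hprov _ h
    rw [hv.2.1, hv.2.2.2.1] at hh
    rw [val_exactlyOne3 L hv, hχ, hv.2.2.2.1, hv.2.1, hv.2.1]
    cases hvφ : v φ <;> cases hvψ : v ψ <;> simp_all
  have hpB : L.PartitionOfTruth (L.disj φ ψ) χ L.bot := by
    apply hPL
    intro v hv hprov
    rw [val_exactlyOne3 L hv, hχ, hv.1, hv.2.2.2.1, hv.2.1, hv.2.1, hv.2.2.1]
    cases hvφ : v φ <;> cases hvψ : v ψ <;> simp
  have hA := hpart (fun _ => φ) (fun _ => ψ) (fun _ => χ)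
    (hQC.1 _) (hQC.1 _) (hQC.1 _) (fun _ => hpA)
  have hB := hpart (fun _ => L.disj φ ψ) (fun _ => χ) (fun _ => L.bot)
    (hQC.1 _) (hQC.1 _) (hQC.1 _) (fun _ => hpB)
  have hA' := tendsto_nhds_unique (((hP φ).add (hP ψ)).add (hP χ)) hA
  have hB' := tendsto_nhds_unique (((hP (L.disj φ ψ)).add (hP χ)).add hbot) hB
  linarith
end
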